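/- Let A₁, …, Aₙ ∈ SL₂(ℂ) be upper triangular matrices, with Aᵢ having diagonal entries λᵢ and λᵢ⁻¹. If a tuple (D₁, …, Dₙ) of diagonal matrices lies in the closure, in the analytic topology on SL₂(ℂ)ⁿ, of the conjugation orbit of (A₁, …, Aₙ), then either Dᵢ = D_{λᵢ} for every i, or Dᵢ = D_{λᵢ⁻¹} for every i. In particular, the intersection of this orbit closure with the set of tuples of diagonal matrices consists of at most two points, which are exchanged by simultaneously swapping the two diagonal entries of every component. -/
import Mathlib


/-- The diagonal matrix `D_λ ∈ SL₂(ℂ)` with diagonal entries `λ, λ⁻¹`. -/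
noncomputable def diagSL (l : ℂˣ) : Matrix.SpecialLinearGroup (Fin 2) ℂ :=
  ⟨!![(l : ℂ), 0; 0, ((l⁻¹ : ℂˣ) : ℂ)], by
    simp [Matrix.det_fin_two_of, ← Units.val_mul]⟩

/-- The upper triangular matrix in `SL₂(ℂ)` with diagonal entries `λ, λ⁻¹` and upper
right entry `α`. -/
noncomputable def triSL (l : ℂˣ) (a : ℂ) : Matrix.SpecialLinearGroup (Fin 2) ℂ :=
  ⟨!![(l : ℂ), a; 0, ((l⁻¹ : ℂˣ) : ℂ)], by
    simp [Matrix.det_fin_two_of, ← Units.val_mul]⟩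

lemma trace_triSL (l : ℂˣ) (a : ℂ) :
    (triSL l a : Matrix (Fin 2) (Fin 2) ℂ).trace = (l : ℂ) + (l : ℂ)⁻¹ := by
  simp [triSL, Matrix.trace_fin_two_of, Units.val_inv_eq_inv_val]

lemma trace_mul_triSL (l m : ℂˣ) (a b : ℂ) :
    ((triSL l a : Matrix (Fin 2) (Fin 2) ℂ) * (triSL m b)).trace
      = (l : ℂ) * (m : ℂ) + ((l : ℂ) * (m : ℂ))⁻¹ := by
  simp only [triSL, Matrix.mul_fin_two, Matrix.trace_fin_two_of, Units.val_inv_eq_inv_val]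
  ring

lemma trace_conjSL (P A : Matrix.SpecialLinearGroup (Fin 2) ℂ) :
    ((P * A * P⁻¹ : Matrix.SpecialLinearGroup (Fin 2) ℂ) : Matrix (Fin 2) (Fin 2) ℂ).trace
      = (A : Matrix (Fin 2) (Fin 2) ℂ).trace := by
  have h : ((P⁻¹ : Matrix.SpecialLinearGroup (Fin 2) ℂ) : Matrix (Fin 2) (Fin 2) ℂ)
      * (P : Matrix (Fin 2) (Fin 2) ℂ) = 1 := by
    rw [← Matrix.SpecialLinearGroup.coe_mul, inv_mul_cancel,
      Matrix.SpecialLinearGroup.coe_one]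
  rw [Matrix.SpecialLinearGroup.coe_mul, Matrix.SpecialLinearGroup.coe_mul,
    Matrix.trace_mul_comm, ← Matrix.mul_assoc, h, Matrix.one_mul]

/-- If `A₁, …, Aₙ ∈ SL₂(ℂ)` are upper triangular with diagonal entries `λᵢ, λᵢ⁻¹` and a
tuple `(B₁, …, Bₙ)` of diagonal matrices of `SL₂(ℂ)` lies in the closure (in the analytic
topology induced from the space of `n`-tuples of `2 × 2` complex matrices) of the
conjugation orbit of `(A₁, …, Aₙ)`, then either `Bᵢ = D_{λᵢ}` for every `i`, or
`Bᵢ = D_{λᵢ⁻¹}` for every `i`. In particular the orbit closure contains at most two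
diagonal tuples, exchanged by simultaneously swapping the diagonal entries. -/
theorem diagTuples_in_orbitClosure {n : ℕ} (lam : Fin n → ℂˣ) (α : Fin n → ℂ)
    (B : Fin n → Matrix.SpecialLinearGroup (Fin 2) ℂ)
    (hBdiag : ∀ i, ((B i : Matrix (Fin 2) (Fin 2) ℂ)).IsDiag)
    (hB : (fun i => (B i : Matrix (Fin 2) (Fin 2) ℂ)) ∈
      closure {M : Fin n → Matrix (Fin 2) (Fin 2) ℂ |
        ∃ P : Matrix.SpecialLinearGroup (Fin 2) ℂ,
          M = fun i =>
            ((P * triSL (lam i) (α i) * P⁻¹ : Matrix.SpecialLinearGroup (Fin 2) ℂ) :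
              Matrix (Fin 2) (Fin 2) ℂ)}) :
    (∀ i, B i = diagSL (lam i)) ∨ (∀ i, B i = diagSL ((lam i)⁻¹)) := by
  classical
  -- Step 1: trace invariants pass to the closure
  set C : Set (Fin n → Matrix (Fin 2) (Fin 2) ℂ) :=
    {M | (∀ i, (M i).trace = (lam i : ℂ) + (lam i : ℂ)⁻¹) ∧
      ∀ i, ∀ j, (M i * M j).trace = (lam i : ℂ) * (lam j : ℂ)
        + ((lam i : ℂ) * (lam j : ℂ))⁻¹} with hC
  have hcont : ∀ i : Fin n, Continuous fun M : Fin n → Matrix (Fin 2) (Fin 2) ℂ => M i :=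
    fun i => continuous_apply i
  have h1 : IsClosed {M : Fin n → Matrix (Fin 2) (Fin 2) ℂ |
      ∀ i, (M i).trace = (lam i : ℂ) + (lam i : ℂ)⁻¹} := by
    rw [Set.setOf_forall]
    exact isClosed_iInter fun i =>
      isClosed_eq ((hcont i).matrix_trace) continuous_const
  have h2 : IsClosed {M : Fin n → Matrix (Fin 2) (Fin 2) ℂ |
      ∀ i, ∀ j, (M i * M j).trace = (lam i : ℂ) * (lam j : ℂ)
        + ((lam i : ℂ) * (lam j : ℂ))⁻¹} := by
    rw [Set.setOf_forall]
    refine isClosed_iInter fun i => ?_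
    rw [Set.setOf_forall]
    exact isClosed_iInter fun j =>
      isClosed_eq (((hcont i).matrix_mul (hcont j)).matrix_trace) continuous_const
  have hclosed : IsClosed C := h1.inter h2
  have hkey : (fun i => (B i : Matrix (Fin 2) (Fin 2) ℂ)) ∈ C := by
    refine closure_minimal ?_ hclosed hB
    rintro M ⟨P, rfl⟩
    constructor
    · intro i
      simp only
      rw [trace_conjSL, trace_triSL]
    · intro i j
      simp only
      rw [← Matrix.SpecialLinearGroup.coe_mul]
      have h : (P * triSL (lam i) (α i) * P⁻¹) * (P * triSL (lam j) (α j) * P⁻¹)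
          = P * (triSL (lam i) (α i) * triSL (lam j) (α j)) * P⁻¹ := by group
      rw [h, trace_conjSL, Matrix.SpecialLinearGroup.coe_mul, trace_mul_triSL]
  obtain ⟨htr, htr2⟩ := hkey
  -- entries
  set b : Fin n → ℂ := fun i => (B i : Matrix (Fin 2) (Fin 2) ℂ) 0 0 with hb
  set d : Fin n → ℂ := fun i => (B i : Matrix (Fin 2) (Fin 2) ℂ) 1 1 with hd
  have hoff1 : ∀ i, (B i : Matrix (Fin 2) (Fin 2) ℂ) 0 1 = 0 := fun i =>
    hBdiag i (by decide)
  have hoff2 : ∀ i, (B i : Matrix (Fin 2) (Fin 2) ℂ) 1 0 = 0 := fun i =>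
    hBdiag i (by decide)
  have hdet : ∀ i, b i * d i = 1 := by
    intro i
    have h := (B i).2
    rw [Matrix.det_fin_two] at h
    simp only [hb, hd]
    linear_combination h + (B i : Matrix (Fin 2) (Fin 2) ℂ) 1 0 * hoff1 i
  have hsum : ∀ i, b i + d i = (lam i : ℂ) + (lam i : ℂ)⁻¹ := by
    intro i
    have h := htr i
    rwa [Matrix.trace_fin_two] at h
  have hunit : ∀ i, (lam i : ℂ) * (lam i : ℂ)⁻¹ = 1 := fun i =>
    mul_inv_cancel₀ (lam i).ne_zero
  have halt : ∀ i, b i = (lam i : ℂ) ∨ b i = (lam i : ℂ)⁻¹ := by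
    intro i
    have h0 : (b i - (lam i : ℂ)) * (b i - (lam i : ℂ)⁻¹) = 0 := by
      linear_combination (b i) * hsum i - hdet i + hunit i
    rcases mul_eq_zero.mp h0 with h | h
    · exact Or.inl (sub_eq_zero.mp h)
    · exact Or.inr (sub_eq_zero.mp h)
  -- trace of product of diagonal matrices
  have htr2' : ∀ i j, b i * b j + d i * d j
      = (lam i : ℂ) * (lam j : ℂ) + (lam i : ℂ)⁻¹ * (lam j : ℂ)⁻¹ := by
    intro i j
    have h := htr2 i j
    rw [Matrix.trace_fin_two, Matrix.mul_apply, Fin.sum_univ_two, Matrix.mul_apply,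
      Fin.sum_univ_two] at h
    simp only [hoff1, hoff2, mul_zero, zero_mul, add_zero, zero_add, mul_inv] at h
    simp only [hb, hd]
    exact h
  have hdval : ∀ i, b i = (lam i : ℂ) → d i = (lam i : ℂ)⁻¹ := by
    intro i hbi
    have h := hsum i
    rw [hbi] at h
    linear_combination h
  have hdval' : ∀ i, b i = (lam i : ℂ)⁻¹ → d i = (lam i : ℂ) := by
    intro i hbi
    have h := hsum i
    rw [hbi] at h
    linear_combination h
  -- conclude
  by_cases hall : ∀ i, b i = (lam i : ℂ)
  · left
    intro i
    apply Subtype.ext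
    have hdi := hdval i (hall i)
    have h00 : (B i : Matrix (Fin 2) (Fin 2) ℂ) 0 0 = (lam i : ℂ) := hall i
    have h11 : (B i : Matrix (Fin 2) (Fin 2) ℂ) 1 1 = (lam i : ℂ)⁻¹ := hdi
    ext x y
    fin_cases x <;> fin_cases y <;>
      simp [diagSL, Units.val_inv_eq_inv_val, h00, h11, hoff1 i, hoff2 i]
  · right
    push_neg at hall
    obtain ⟨j, hj⟩ := hall
    have hbj : b j = (lam j : ℂ)⁻¹ := (halt j).resolve_left hj
    have hjne : (lam j : ℂ) ≠ (lam j : ℂ)⁻¹ := fun h => hj (hbj.trans h.symm)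
    have hbi : ∀ i, b i = (lam i : ℂ)⁻¹ := by
      intro i
      rcases halt i with h | h
      · by_cases hi : (lam i : ℂ) = (lam i : ℂ)⁻¹
        · exact h.trans hi
        · exfalso
          have hdi := hdval i h
          have hdj := hdval' j hbj
          have key := htr2' i j
          rw [h, hbj, hdi, hdj] at key
          have h0 : ((lam i : ℂ) - (lam i : ℂ)⁻¹) * ((lam j : ℂ) - (lam j : ℂ)⁻¹) = 0 := by
            linear_combination -key
          rcases mul_eq_zero.mp h0 with h1 | h1
          · exact hi (sub_eq_zero.mp h1)
          · exact hjne (sub_eq_zero.mp h1)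
      · exact h
    intro i
    apply Subtype.ext
    have hdi := hdval' i (hbi i)
    have h00 : (B i : Matrix (Fin 2) (Fin 2) ℂ) 0 0 = (lam i : ℂ)⁻¹ := hbi i
    have h11 : (B i : Matrix (Fin 2) (Fin 2) ℂ) 1 1 = (lam i : ℂ) := hdi
    ext x y
    fin_cases x <;> fin_cases y <;>
      simp [diagSL, Units.val_inv_eq_inv_val, h00, h11, hoff1 i, hoff2 i]
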